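/- Let U be the block-diagonal (nd)×(nd) matrix with diagonal blocks U_1, …, U_n, where each U_i is a d×d orthogonal matrix, and set S̃' := U S̃ Uᵀ. Then: (a) for every integer t ≥ 1 and all i, j, ‖(S̃'^{2t})(i,j)‖_HS = ‖(S̃^{2t})(i,j)‖_HS, where (·)(i,j) denotes the (i,j) d×d block and ‖·‖_HS the Frobenius norm; and (b) if S̃ v = λ v then S̃' (Uv) = λ (Uv), and for all u, v ∈ ℝ^{nd} and all i, ⟨(Uv)(i), (Uu)(i)⟩ = ⟨v(i), u(i)⟩. Consequently the vector diffusion mapping is invariant to the choice of orthonormal basis in each block (i.e., to replacing S̃ by S̃'). -/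

import Mathlib

open Matrix BigOperators

lemma vdm_frob_trace {d : ℕ} (X : Matrix (Fin d) (Fin d) ℝ) :
    ∑ a, ∑ b, (X a b)^2 = Matrix.trace (X * Xᵀ) := by
  simp [Matrix.trace, Matrix.mul_apply, Matrix.diag, sq]

lemma vdm_tr_conj {d : ℕ} (A B M : Matrix (Fin d) (Fin d) ℝ)
    (hA : Aᵀ * A = 1) (hB : Bᵀ * B = 1) :
    Matrix.trace ((A * M * Bᵀ) * (A * M * Bᵀ)ᵀ) = Matrix.trace (M * Mᵀ) := by
  have h1 : (A * M * Bᵀ) * (A * M * Bᵀ)ᵀ = A * ((M * Mᵀ) * Aᵀ) := by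
    rw [Matrix.transpose_mul, Matrix.transpose_mul, Matrix.transpose_transpose]
    simp only [Matrix.mul_assoc]
    rw [← Matrix.mul_assoc Bᵀ B, hB, Matrix.one_mul]
  rw [h1, Matrix.trace_mul_comm, Matrix.mul_assoc, hA, Matrix.mul_one]

theorem vdm_basis_invariance
    (n d : ℕ) (hn : 1 ≤ n) (hd : 1 ≤ d)
    (w : Fin n → Fin n → ℝ)
    (hw_symm : ∀ i j, w i j = w j i)
    (hw_nonneg : ∀ i j, 0 ≤ w i j)
    (hw_diag : ∀ i, w i i = 0)
    (O : Fin n → Fin n → Matrix (Fin d) (Fin d) ℝ)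
    (hO_orth : ∀ i j, (O i j)ᵀ * O i j = 1 ∧ O i j * (O i j)ᵀ = 1)
    (hO_symm : ∀ i j, (O i j)ᵀ = O j i)
    (deg : Fin n → ℝ) (hdeg_def : ∀ i, deg i = ∑ j, w i j)
    (hdeg_pos : ∀ i, 0 < deg i)
    (Stil : Matrix (Fin n × Fin d) (Fin n × Fin d) ℝ)
    (hStil : ∀ p q, Stil p q =
      (w p.1 q.1 / Real.sqrt (deg p.1 * deg q.1)) * O p.1 q.1 p.2 q.2)
    -- block-diagonal orthogonal matrix U with blocks U_1, …, U_n
    (Ublk : Fin n → Matrix (Fin d) (Fin d) ℝ)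
    (hUblk : ∀ i, (Ublk i)ᵀ * Ublk i = 1 ∧ Ublk i * (Ublk i)ᵀ = 1)
    (U : Matrix (Fin n × Fin d) (Fin n × Fin d) ℝ)
    (hU : ∀ p q, U p q = if p.1 = q.1 then Ublk p.1 p.2 q.2 else 0)
    (Stil' : Matrix (Fin n × Fin d) (Fin n × Fin d) ℝ)
    (hStil' : Stil' = U * Stil * Uᵀ) :
    (∀ t : ℕ, 1 ≤ t → ∀ i j : Fin n,
      Real.sqrt (∑ a, ∑ b, ((Stil' ^ (2 * t)) (i, a) (j, b)) ^ 2) =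
        Real.sqrt (∑ a, ∑ b, ((Stil ^ (2 * t)) (i, a) (j, b)) ^ 2)) ∧
    (∀ (lam : ℝ) (vv : Fin n × Fin d → ℝ), Stil.mulVec vv = lam • vv →
      Stil'.mulVec (U.mulVec vv) = lam • (U.mulVec vv)) ∧
    (∀ (u vv : Fin n × Fin d → ℝ) (i : Fin n),
      (∑ a, U.mulVec vv (i, a) * U.mulVec u (i, a)) = ∑ a, vv (i, a) * u (i, a)) := by
  have horthblk : ∀ (i : Fin n) (b c : Fin d),
      (∑ a, Ublk i a b * Ublk i a c) = if b = c then 1 else 0 := by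
    intro i b c
    have := congrFun (congrFun (hUblk i).1 b) c
    simpa [Matrix.mul_apply, Matrix.transpose_apply, Matrix.one_apply] using this
  have hUtU : Uᵀ * U = 1 := by
    ext ⟨i, a⟩ ⟨j, b⟩
    rw [Matrix.mul_apply]
    simp only [Matrix.transpose_apply, hU]
    rw [Fintype.sum_prod_type]
    by_cases hij : i = j
    · subst hij
      rw [Matrix.one_apply]
      simp [ite_mul, mul_ite, Finset.sum_ite_eq, Finset.sum_ite_eq', horthblk, Prod.ext_iff]
    · rw [Matrix.one_apply_ne (by simp [Prod.ext_iff, hij])]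
      apply Finset.sum_eq_zero; intro k _
      apply Finset.sum_eq_zero; intro c _
      rcases eq_or_ne k i with rfl | hk
      · simp [hij]
      · simp [hk]
  have hUUt : U * Uᵀ = 1 := mul_eq_one_comm.mp hUtU
  have hpow : ∀ m : ℕ, Stil' ^ m = U * Stil ^ m * Uᵀ := by
    intro m
    induction m with
    | zero => simp [hUUt]
    | succ k ih =>
        rw [pow_succ, ih, hStil', pow_succ]
        simp only [Matrix.mul_assoc]
        rw [← Matrix.mul_assoc Uᵀ U, hUtU, Matrix.one_mul]
  have hUmul : ∀ (N : Matrix (Fin n × Fin d) (Fin n × Fin d) ℝ) (i : Fin n) (a : Fin d)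
      (q : Fin n × Fin d), (U * N) (i, a) q = ∑ c, Ublk i a c * N (i, c) q := by
    intro N i a q
    rw [Matrix.mul_apply, Fintype.sum_prod_type, Finset.sum_comm]
    simp [hU, ite_mul, Finset.sum_ite_eq]
  refine ⟨?_, ?_, ?_⟩
  · intro t _ i j
    congr 1
    set M := Stil ^ (2 * t) with hM
    have hblk : ∀ a b, (Stil' ^ (2 * t)) (i, a) (j, b) =
        (Ublk i * (Matrix.of fun a b => M (i, a) (j, b)) * (Ublk j)ᵀ) a b := by
      intro a b
      rw [hpow, Matrix.mul_apply, Matrix.mul_apply]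
      simp only [hUmul, Matrix.transpose_apply, Matrix.mul_apply, Matrix.of_apply, hU]
      rw [Fintype.sum_prod_type, Finset.sum_comm]
      simp [mul_ite, mul_zero, Finset.sum_ite_eq, Finset.mul_sum, Finset.sum_mul]
      rfl
    calc ∑ a, ∑ b, ((Stil' ^ (2 * t)) (i, a) (j, b)) ^ 2
        = ∑ a, ∑ b, ((Ublk i * (Matrix.of fun a b => M (i, a) (j, b)) * (Ublk j)ᵀ) a b) ^ 2 := by
          simp_rw [hblk]
      _ = ∑ a, ∑ b, ((Matrix.of fun a b => M (i, a) (j, b) : Matrix (Fin d) (Fin d) ℝ) a b) ^ 2 := by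
          rw [vdm_frob_trace, vdm_frob_trace,
            vdm_tr_conj _ _ _ (hUblk i).1 (hUblk j).1]
      _ = ∑ a, ∑ b, (M (i, a) (j, b)) ^ 2 := rfl
  · intro lam vv hv
    rw [hStil']
    calc (U * Stil * Uᵀ) *ᵥ (U *ᵥ vv) = ((U * Stil * Uᵀ) * U) *ᵥ vv :=
          Matrix.mulVec_mulVec _ _ _
      _ = (U * Stil) *ᵥ vv := by rw [Matrix.mul_assoc (U * Stil), hUtU, Matrix.mul_one]
      _ = U *ᵥ (Stil *ᵥ vv) := (Matrix.mulVec_mulVec _ _ _).symm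
      _ = U *ᵥ (lam • vv) := by rw [hv]
      _ = lam • (U *ᵥ vv) := Matrix.mulVec_smul _ _ _
  · intro u vv i
    have key : ∀ (x : Fin n × Fin d → ℝ) (a : Fin d),
        U.mulVec x (i, a) = ∑ b, Ublk i a b * x (i, b) := by
      intro x a
      rw [Matrix.mulVec, dotProduct, Fintype.sum_prod_type, Finset.sum_comm]
      simp [hU, ite_mul, Finset.sum_ite_eq]
    have expand : ∀ a, (∑ b, Ublk i a b * vv (i, b)) * (∑ c, Ublk i a c * u (i, c))
        = ∑ b, ∑ c, (Ublk i a b * Ublk i a c) * (vv (i, b) * u (i, c)) := by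
      intro a
      rw [Finset.sum_mul_sum]
      exact Finset.sum_congr rfl fun b _ => Finset.sum_congr rfl fun c _ => by ring
    calc ∑ a, U.mulVec vv (i, a) * U.mulVec u (i, a)
        = ∑ a, ∑ b, ∑ c, (Ublk i a b * Ublk i a c) * (vv (i, b) * u (i, c)) := by
          refine Finset.sum_congr rfl fun a _ => ?_
          rw [key, key, expand]
      _ = ∑ b, ∑ c, ∑ a, (Ublk i a b * Ublk i a c) * (vv (i, b) * u (i, c)) := by
          rw [Finset.sum_comm]
          exact Finset.sum_congr rfl fun b _ => Finset.sum_comm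
      _ = ∑ b, ∑ c, (∑ a, Ublk i a b * Ublk i a c) * (vv (i, b) * u (i, c)) := by
          simp_rw [← Finset.sum_mul]
      _ = ∑ b, vv (i, b) * u (i, b) := by
          simp [horthblk, ite_mul, Finset.sum_ite_eq]
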